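/- Let n ≥ 1, a : Fin n → ℝ and b ∈ ℝ with a i > 0 for all i and b > 0, and let λ ∈ ℝ satisfy -b < λ < a i for all i. Let f_λ be the diagonal linear map on ℝ^{n+1} multiplying x_i by Real.sqrt ((a i - λ)/(a i)) (i ≥ 1) and x₀ by Real.sqrt ((b + λ)/b), and let g_λ = f_λ⁻¹ be its inverse (diagonal with the reciprocal entries). Suppose x, y ∈ ℝ^{n+1} satisfy ‖x‖ = 1, ‖y‖ = 1, q(x) = ∑_{i=1}^n (x i)^2/a i - (x 0)^2/b = 0 and q_λ(y) = ∑_{i=1}^n (y i)^2/(a i - λ) - (y 0)^2/(b + λ) = 0. Then ‖f_λ x‖ = 1, ‖g_λ y‖ = 1, and Real.arccos ⟪x, y⟫ = Real.arccos ⟪f_λ x, g_λ y⟫. (Spherical Ivory Lemma: the spherical distance between x and y equals the spherical distance between the corresponding points f_λ x and f_λ⁻¹ y on the two confocal spherical ellipsoids.) -/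

import Mathlib

open RealInnerProductSpace

/-- **Spherical Ivory Lemma**: for `x` on the spherical ellipsoid `E` and `y` on the confocal
spherical ellipsoid `E_λ`, the spherical distance `arccos ⟪x, y⟫` equals the spherical
distance between the corresponding points `f_λ x ∈ E_λ` and `f_λ⁻¹ y ∈ E`. -/
theorem ivory_lemma_sphere (n : ℕ) (hn : 1 ≤ n) (a : Fin n → ℝ) (b : ℝ)
    (ha : ∀ i, 0 < a i) (hb : 0 < b)
    (lam : ℝ) (hlam₁ : -b < lam) (hlam₂ : ∀ i, lam < a i)
    (f g : EuclideanSpace ℝ (Fin (n + 1)) →ₗ[ℝ] EuclideanSpace ℝ (Fin (n + 1)))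
    (hf0 : ∀ x : EuclideanSpace ℝ (Fin (n + 1)), f x 0 = Real.sqrt ((b + lam) / b) * x 0)
    (hfi : ∀ (x : EuclideanSpace ℝ (Fin (n + 1))) (i : Fin n),
      f x i.succ = Real.sqrt ((a i - lam) / a i) * x i.succ)
    (hg0 : ∀ y : EuclideanSpace ℝ (Fin (n + 1)), g y 0 = (Real.sqrt ((b + lam) / b))⁻¹ * y 0)
    (hgi : ∀ (y : EuclideanSpace ℝ (Fin (n + 1))) (i : Fin n),
      g y i.succ = (Real.sqrt ((a i - lam) / a i))⁻¹ * y i.succ)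
    (x y : EuclideanSpace ℝ (Fin (n + 1))) (hx : ‖x‖ = 1) (hy : ‖y‖ = 1)
    (hqx : ∑ i : Fin n, (x i.succ) ^ 2 / a i - (x 0) ^ 2 / b = 0)
    (hqy : ∑ i : Fin n, (y i.succ) ^ 2 / (a i - lam) - (y 0) ^ 2 / (b + lam) = 0) :
    ‖f x‖ = 1 ∧ ‖g y‖ = 1 ∧ Real.arccos ⟪x, y⟫ = Real.arccos ⟪f x, g y⟫ := by

  have hbl : (0:ℝ) < b + lam := by linarith
  have hal : ∀ i, (0:ℝ) < a i - lam := fun i => by have := hlam₂ i; linarith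
  have hc0 : (0:ℝ) < (b + lam) / b := div_pos hbl hb
  have hci : ∀ i, (0:ℝ) < (a i - lam) / a i := fun i => div_pos (hal i) (ha i)
  have hs0 : Real.sqrt ((b + lam) / b) ^ 2 = (b + lam) / b := Real.sq_sqrt hc0.le
  have hsi : ∀ i, Real.sqrt ((a i - lam) / a i) ^ 2 = (a i - lam) / a i :=
    fun i => Real.sq_sqrt (hci i).le
  have norm_sq : ∀ v : EuclideanSpace ℝ (Fin (n + 1)), ‖v‖ ^ 2 = ∑ i, (v i) ^ 2 := by
    intro v
    rw [EuclideanSpace.norm_eq, Real.sq_sqrt (by positivity)]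
    simp [sq_abs]
  have hx2 : (x 0) ^ 2 + ∑ i : Fin n, (x i.succ) ^ 2 = 1 := by
    have := norm_sq x
    rw [hx, Fin.sum_univ_succ] at this
    linarith
  have hy2 : (y 0) ^ 2 + ∑ i : Fin n, (y i.succ) ^ 2 = 1 := by
    have := norm_sq y
    rw [hy, Fin.sum_univ_succ] at this
    linarith
  have hqx' : ∑ i : Fin n, (x i.succ) ^ 2 / a i = (x 0) ^ 2 / b := by linarith
  have hqy' : ∑ i : Fin n, (y i.succ) ^ 2 / (a i - lam) = (y 0) ^ 2 / (b + lam) := by linarith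
  have hfx : ‖f x‖ = 1 := by
    have key : ‖f x‖ ^ 2 = 1 := by
      rw [norm_sq, Fin.sum_univ_succ]
      simp only [hf0, hfi, mul_pow, hs0, hsi]
      have hterm : ∀ i : Fin n, (a i - lam) / a i * (x i.succ) ^ 2
          = (x i.succ) ^ 2 - lam * ((x i.succ) ^ 2 / a i) := by
        intro i
        have hai := (ha i).ne'
        field_simp
      rw [Finset.sum_congr rfl (fun i _ => hterm i), Finset.sum_sub_distrib,
        ← Finset.mul_sum, hqx']
      have hb' := hb.ne'
      field_simp
      linear_combination b * hx2
    nlinarith [norm_nonneg (f x)]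
  have hgy : ‖g y‖ = 1 := by
    have key : ‖g y‖ ^ 2 = 1 := by
      rw [norm_sq, Fin.sum_univ_succ]
      simp only [hg0, hgi, mul_pow, inv_pow, hs0, hsi]
      have hterm : ∀ i : Fin n, ((a i - lam) / a i)⁻¹ * (y i.succ) ^ 2
          = (y i.succ) ^ 2 + lam * ((y i.succ) ^ 2 / (a i - lam)) := by
        intro i
        have h1 := (ha i).ne'
        have h2 := (hal i).ne'
        field_simp
        ring
      rw [Finset.sum_congr rfl (fun i _ => hterm i), Finset.sum_add_distrib,
        ← Finset.mul_sum, hqy']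
      have hb' := hb.ne'
      have hbl' := hbl.ne'
      field_simp
      linear_combination (b + lam) * hy2
    nlinarith [norm_nonneg (g y)]
  refine ⟨hfx, hgy, ?_⟩
  have hip : ⟪f x, g y⟫ = ⟪x, y⟫ := by
    simp only [PiLp.inner_apply, RCLike.inner_apply, conj_trivial]
    refine Finset.sum_congr rfl fun i _ => ?_
    refine Fin.cases ?_ ?_ i
    · rw [hf0, hg0]
      have : Real.sqrt ((b + lam) / b) ≠ 0 := (Real.sqrt_pos.mpr hc0).ne'
      field_simp
    · intro j
      rw [hfi, hgi]
      have : Real.sqrt ((a j - lam) / a j) ≠ 0 := (Real.sqrt_pos.mpr (hci j)).ne'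
      field_simp
  rw [hip]
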